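/- Let Λ ⊂ {1,…,N}, let x̃ ∈ ℝ^N with supp(x̃) ∩ Λ = ∅, define h = A_Λᵀ A_Λ x̃, and suppose the M×N real matrix Φ satisfies the RIP of order ‖x̃‖₀ + |Λ| + 1 with isometry constant δ. If ‖x̃‖_∞ > (2δ/(1−δ))‖x̃‖₂, then every index j maximizing |h(j)| over j ∈ {1,…,N} belongs to supp(x̃); that is, there exists j ∈ supp(x̃) with |h(j)| strictly larger than |h(j')| for every j' ∉ supp(x̃). -/

import Mathlib

noncomputable section

namespace OMP

open Matrix Finset

/-- The support of a vector, as a `Finset`. -/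
def supp {n : ℕ} (x : Fin n → ℝ) : Finset (Fin n) :=
  Finset.univ.filter fun j => x j ≠ 0

/-- The Euclidean (ℓ²) norm of a vector. -/
def l2 {n : ℕ} (x : Fin n → ℝ) : ℝ := Real.sqrt (∑ j, x j ^ 2)

/-- The ℓ^∞ norm of a vector. -/
def linf {n : ℕ} (x : Fin n → ℝ) : ℝ := ⨆ j, |x j|

/-- The standard inner product of two vectors. -/
def dotp {n : ℕ} (x y : Fin n → ℝ) : ℝ := ∑ j, x j * y j

/-- The restriction of a vector to a set of indices (zero elsewhere). -/
def restr {n : ℕ} (Γ : Finset (Fin n)) (x : Fin n → ℝ) : Fin n → ℝ :=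
  fun j => if j ∈ Γ then x j else 0

/-- The restricted isometry property of order `K` with isometry constant `δ`. -/
def RIP {M N : ℕ} (K : ℕ) (Φ : Matrix (Fin M) (Fin N) ℝ) (δ : ℝ) : Prop :=
  0 < δ ∧ δ < 1 ∧ ∀ x : Fin N → ℝ, (supp x).card ≤ K →
    (1 - δ) * l2 x ^ 2 ≤ l2 (Φ.mulVec x) ^ 2 ∧
      l2 (Φ.mulVec x) ^ 2 ≤ (1 + δ) * l2 x ^ 2

/-- The span of the columns of `Φ` indexed by `Λ`, as a submodule of Euclidean space. -/
def colSpan {M N : ℕ} (Φ : Matrix (Fin M) (Fin N) ℝ) (Λ : Finset (Fin N)) :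
    Submodule ℝ (EuclideanSpace ℝ (Fin M)) :=
  Submodule.span ℝ ((fun j => (WithLp.equiv 2 (Fin M → ℝ)).symm fun i => Φ i j) '' (Λ : Set (Fin N)))

/-- Orthogonal projection `P_Λ` onto the span of the columns of `Φ` indexed by `Λ`. -/
def projCol {M N : ℕ} (Φ : Matrix (Fin M) (Fin N) ℝ) (Λ : Finset (Fin N))
    (v : Fin M → ℝ) : Fin M → ℝ :=
  WithLp.equiv 2 (Fin M → ℝ)
    (Submodule.orthogonalProjection (colSpan Φ Λ) ((WithLp.equiv 2 (Fin M → ℝ)).symm v) : EuclideanSpace ℝ (Fin M))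

/-- The matrix `A_Λ = (I - P_Λ) Φ`: the columns of `Φ` orthogonalized against `colSpan Φ Λ`. -/
def Amat {M N : ℕ} (Φ : Matrix (Fin M) (Fin N) ℝ) (Λ : Finset (Fin N)) :
    Matrix (Fin M) (Fin N) ℝ :=
  Matrix.of fun i j => Φ i j - projCol Φ Λ (fun i' => Φ i' j) i

lemma l2_nonneg {n : ℕ} (x : Fin n → ℝ) : 0 ≤ l2 x := Real.sqrt_nonneg _

lemma l2_sq {n : ℕ} (x : Fin n → ℝ) : l2 x ^ 2 = ∑ j, x j ^ 2 := by
  rw [l2, Real.sq_sqrt]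
  exact Finset.sum_nonneg fun j _ => sq_nonneg _

lemma l2_eq_zero {n : ℕ} {x : Fin n → ℝ} (hx : l2 x = 0) : x = 0 := by
  have h : ∑ j, x j ^ 2 = 0 := by rw [← l2_sq, hx]; ring
  funext j
  have := (Finset.sum_eq_zero_iff_of_nonneg (fun j _ => sq_nonneg (x j))).1 h j (mem_univ j)
  simpa using pow_eq_zero_iff (n := 2) (by norm_num) |>.1 this

lemma dotp_self {n : ℕ} (x : Fin n → ℝ) : dotp x x = l2 x ^ 2 := by
  rw [l2_sq, dotp]; congr 1; funext j; ring

lemma polarization {n : ℕ} (u v : Fin n → ℝ) :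
    l2 (u + v) ^ 2 - l2 (u - v) ^ 2 = 4 * dotp u v := by
  simp only [l2_sq, dotp, Finset.mul_sum, ← Finset.sum_sub_distrib]
  congr 1; funext j; simp [Pi.add_apply, Pi.sub_apply]; ring

lemma parallelogram {n : ℕ} (u v : Fin n → ℝ) :
    l2 (u + v) ^ 2 + l2 (u - v) ^ 2 = 2 * (l2 u ^ 2 + l2 v ^ 2) := by
  simp only [l2_sq, ← Finset.sum_add_distrib, Finset.mul_sum]
  congr 1; funext j; simp [Pi.add_apply, Pi.sub_apply]; ring

lemma supp_add_subset {n : ℕ} (u v : Fin n → ℝ) : supp (u + v) ⊆ supp u ∪ supp v := by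
  intro j hj
  simp only [supp, mem_filter, mem_univ, true_and, mem_union, Pi.add_apply] at *
  by_contra hc
  push_neg at hc
  simp [hc.1, hc.2] at hj

lemma supp_sub_subset {n : ℕ} (u v : Fin n → ℝ) : supp (u - v) ⊆ supp u ∪ supp v := by
  intro j hj
  simp only [supp, mem_filter, mem_univ, true_and, mem_union, Pi.sub_apply] at *
  by_contra hc
  push_neg at hc
  simp [hc.1, hc.2] at hj


lemma rip_inner_half {M N K : ℕ} {Φ : Matrix (Fin M) (Fin N) ℝ} {δ : ℝ}
    (hRIP : RIP K Φ δ) (u v : Fin N → ℝ)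
    (hcard : (supp u ∪ supp v).card ≤ K) :
    |dotp (Φ.mulVec u) (Φ.mulVec v) - dotp u v| ≤ δ / 2 * (l2 u ^ 2 + l2 v ^ 2) := by
  obtain ⟨hδ0, hδ1, hR⟩ := hRIP
  have hp : (supp (u + v)).card ≤ K :=
    le_trans (Finset.card_le_card (supp_add_subset u v)) hcard
  have hm : (supp (u - v)).card ≤ K :=
    le_trans (Finset.card_le_card (supp_sub_subset u v)) hcard
  obtain ⟨hp1, hp2⟩ := hR (u + v) hp
  obtain ⟨hm1, hm2⟩ := hR (u - v) hm
  rw [Matrix.mulVec_add] at hp1 hp2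
  rw [Matrix.mulVec_sub] at hm1 hm2
  have e1 : l2 (Φ.mulVec u + Φ.mulVec v) ^ 2 - l2 (Φ.mulVec u - Φ.mulVec v) ^ 2
      = 4 * dotp (Φ.mulVec u) (Φ.mulVec v) := polarization _ _
  have e2 := polarization u v
  have e3 := parallelogram u v
  rw [abs_le]
  constructor <;> nlinarith [sq_nonneg (l2 (u+v)), sq_nonneg (l2 (u-v))]

lemma rip_inner {M N K : ℕ} {Φ : Matrix (Fin M) (Fin N) ℝ} {δ : ℝ}
    (hRIP : RIP K Φ δ) (u v : Fin N → ℝ)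
    (hcard : (supp u ∪ supp v).card ≤ K) :
    |dotp (Φ.mulVec u) (Φ.mulVec v) - dotp u v| ≤ δ * l2 u * l2 v := by
  obtain ⟨hδ0, hδ1, _⟩ := hRIP
  rcases eq_or_lt_of_le (l2_nonneg u) with hu | hu
  · have : u = 0 := l2_eq_zero hu.symm
    subst this
    simp [dotp, Matrix.mulVec_zero, ← hu]
  rcases eq_or_lt_of_le (l2_nonneg v) with hv | hv
  · have : v = 0 := l2_eq_zero hv.symm
    subst this
    simp [dotp, Matrix.mulVec_zero, ← hv]
  set t : ℝ := l2 u / l2 v with ht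
  have ht0 : 0 < t := div_pos hu hv
  have hsupp : supp (t • v) ⊆ supp v := by
    intro j hj
    simp only [supp, mem_filter, mem_univ, true_and, Pi.smul_apply, smul_eq_mul] at *
    exact fun hz => hj (by rw [hz, mul_zero])
  have hcard' : (supp u ∪ supp (t • v)).card ≤ K :=
    le_trans (Finset.card_le_card (Finset.union_subset_union_right hsupp)) hcard
  have key := rip_inner_half ⟨hδ0, hδ1, ‹_›⟩ u (t • v) hcard'
  have hmv : Φ.mulVec (t • v) = t • Φ.mulVec v := by
    rw [Matrix.mulVec_smul]
  have hd1 : dotp (Φ.mulVec u) (t • Φ.mulVec v) = t * dotp (Φ.mulVec u) (Φ.mulVec v) := by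
    simp [dotp, Finset.mul_sum]; congr 1; funext j; ring
  have hd2 : dotp u (t • v) = t * dotp u v := by
    simp [dotp, Finset.mul_sum]; congr 1; funext j; ring
  have hl2 : l2 (t • v) ^ 2 = t ^ 2 * l2 v ^ 2 := by
    simp only [l2_sq, Finset.mul_sum]; congr 1; funext j
    simp [Pi.smul_apply]; ring
  rw [hmv, hd1, hd2, ← mul_sub, abs_mul, abs_of_pos ht0, hl2] at key
  have htv : t * l2 v = l2 u := by rw [ht, div_mul_cancel₀ _ hv.ne']
  have ht2 : t ^ 2 * l2 v ^ 2 = l2 u ^ 2 := by rw [← mul_pow, htv]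
  rw [ht2] at key
  have : t * |dotp (Φ.mulVec u) (Φ.mulVec v) - dotp u v| ≤ δ * l2 u ^ 2 := by
    calc _ ≤ δ / 2 * (l2 u ^ 2 + l2 u ^ 2) := key
    _ = δ * l2 u ^ 2 := by ring
  calc |dotp (Φ.mulVec u) (Φ.mulVec v) - dotp u v|
      = (t * |dotp (Φ.mulVec u) (Φ.mulVec v) - dotp u v|) / t := by field_simp
    _ ≤ (δ * l2 u ^ 2) / t := by gcongr
    _ = δ * l2 u * l2 v := by rw [ht]; field_simp


variable {M N : ℕ} (Φ : Matrix (Fin M) (Fin N) ℝ) (Λ : Finset (Fin N))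

abbrev toE {M : ℕ} (v : Fin M → ℝ) : EuclideanSpace ℝ (Fin M) :=
  (WithLp.equiv 2 (Fin M → ℝ)).symm v

lemma toE_apply {M : ℕ} (v : Fin M → ℝ) (i : Fin M) : toE v i = v i := rfl

lemma l2_eq_norm {M : ℕ} (v : Fin M → ℝ) : l2 v = ‖toE v‖ := by
  rw [EuclideanSpace.norm_eq, l2]
  congr 1
  exact Finset.sum_congr rfl fun i _ => by rw [toE_apply, Real.norm_eq_abs, sq_abs]

lemma dotp_eq_inner {M : ℕ} (u v : Fin M → ℝ) :
    dotp u v = (inner ℝ (toE u) (toE v) : ℝ) := by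
  rw [dotp, PiLp.inner_apply]
  exact Finset.sum_congr rfl fun i _ => by
    simp [toE_apply, RCLike.inner_apply, mul_comm]

/-- The linear map `z ↦ toE (Φ (restr Λ z))`. -/
def colComb : (Fin N → ℝ) →ₗ[ℝ] EuclideanSpace ℝ (Fin M) where
  toFun z := toE (Φ.mulVec (restr Λ z))
  map_add' z z' := by
    have : restr Λ (z + z') = restr Λ z + restr Λ z' := by
      funext j; simp only [restr, Pi.add_apply]; split <;> simp
    simp only [this, Matrix.mulVec_add]; rfl
  map_smul' c z := by
    have : restr Λ (c • z) = c • restr Λ z := by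
      funext j; simp only [restr, Pi.smul_apply, smul_eq_mul]; split <;> simp
    simp only [this, Matrix.mulVec_smul]; rfl

lemma colSpan_le_range : colSpan Φ Λ ≤ LinearMap.range (colComb Φ Λ) := by
  rw [colSpan, Submodule.span_le]
  rintro w ⟨j, hj, rfl⟩
  refine ⟨Pi.single j 1, ?_⟩
  have hr : restr Λ (Pi.single j 1) = Pi.single j 1 := by
    funext i
    simp only [restr]
    split
    · rfl
    · rw [Pi.single_eq_of_ne (fun hij => by simp_all) 1]
  simp only [colComb, LinearMap.coe_mk, AddHom.coe_mk, hr, Matrix.mulVec_single]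
  congr 1
  funext i
  simp

lemma mem_colSpan_rep {w : EuclideanSpace ℝ (Fin M)} (hw : w ∈ colSpan Φ Λ) :
    ∃ z : Fin N → ℝ, (∀ j, j ∉ Λ → z j = 0) ∧ w = toE (Φ.mulVec z) := by
  obtain ⟨z', hz'⟩ := colSpan_le_range Φ Λ hw
  refine ⟨restr Λ z', fun j hj => by simp [restr, hj], ?_⟩
  rw [← hz']; rfl

/-- `projCol` as a linear map. -/
def projL : (Fin M → ℝ) →ₗ[ℝ] (Fin M → ℝ) where
  toFun := projCol Φ Λ
  map_add' v w := by
    simp only [projCol, WithLp.equiv_symm_apply, WithLp.equiv_apply, WithLp.toLp_add, map_add, Submodule.coe_add, WithLp.ofLp_add]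
  map_smul' c v := by
    simp only [projCol, WithLp.equiv_symm_apply, WithLp.equiv_apply, WithLp.toLp_smul, _root_.map_smul, SetLike.val_smul, WithLp.ofLp_smul,
      RingHom.id_apply]

lemma mulVec_eq_sum (x : Fin N → ℝ) :
    Φ.mulVec x = ∑ j, x j • (fun i => Φ i j) := by
  funext i
  rw [Matrix.mulVec, dotProduct, Finset.sum_apply]
  exact Finset.sum_congr rfl fun j _ => (mul_comm _ _)

lemma projCol_mulVec (x : Fin N → ℝ) (i : Fin M) :
    projCol Φ Λ (Φ.mulVec x) i = ∑ j, x j * projCol Φ Λ (fun i' => Φ i' j) i := by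
  have : projCol Φ Λ (Φ.mulVec x) = ∑ j, x j • projCol Φ Λ (fun i' => Φ i' j) := by
    show projL Φ Λ (Φ.mulVec x) = ∑ j, x j • projL Φ Λ (fun i' => Φ i' j)
    rw [mulVec_eq_sum, map_sum]
    exact Finset.sum_congr rfl fun j _ => by rw [_root_.map_smul]
  rw [this, Finset.sum_apply]
  exact Finset.sum_congr rfl fun j _ => rfl

lemma Amat_mulVec (x : Fin N → ℝ) :
    (Amat Φ Λ).mulVec x = Φ.mulVec x - projCol Φ Λ (Φ.mulVec x) := by
  funext i
  simp only [Amat, Matrix.mulVec, dotProduct, Matrix.of_apply, Pi.sub_apply]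
  rw [Finset.sum_congr rfl (fun j _ => sub_mul (Φ i j) _ (x j)), Finset.sum_sub_distrib]
  rw [projCol_mulVec]
  congr 1
  exact Finset.sum_congr rfl fun j _ => mul_comm _ _


lemma toE_inj {M : ℕ} {u v : Fin M → ℝ} (h : toE u = toE v) : u = v :=
  (WithLp.equiv 2 (Fin M → ℝ)).symm.injective h

lemma projCol_mem (v : Fin M → ℝ) : toE (projCol Φ Λ v) ∈ colSpan Φ Λ := by
  simp only [projCol]
  exact (Submodule.orthogonalProjection (colSpan Φ Λ) (toE v)).2

lemma Amat_mulVec_mem_orthogonal (x : Fin N → ℝ) :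
    toE ((Amat Φ Λ).mulVec x) ∈ (colSpan Φ Λ)ᗮ := by
  rw [Amat_mulVec]
  have : toE (Φ.mulVec x - projCol Φ Λ (Φ.mulVec x))
      = toE (Φ.mulVec x) - Submodule.orthogonalProjection (colSpan Φ Λ) (toE (Φ.mulVec x)) := rfl
  rw [this]
  exact Submodule.sub_starProjection_mem_orthogonal _

lemma dotp_orthogonal {a b : Fin M → ℝ} (ha : toE a ∈ colSpan Φ Λ)
    (hb : toE b ∈ (colSpan Φ Λ)ᗮ) : dotp a b = 0 := by
  rw [dotp_eq_inner]
  exact (Submodule.mem_orthogonal _ _).1 hb _ ha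

lemma Amat_transpose_mulVec (w : Fin M → ℝ) (j : Fin N) :
    ((Amat Φ Λ)ᵀ.mulVec w) j = dotp (fun i => Amat Φ Λ i j) w := by
  rw [Matrix.mulVec, dotProduct, dotp]
  exact Finset.sum_congr rfl fun i _ => rfl

lemma Amat_col_eq_zero {j : Fin N} (hj : j ∈ Λ) (i : Fin M) : Amat Φ Λ i j = 0 := by
  have hmem : toE (fun i' => Φ i' j) ∈ colSpan Φ Λ :=
    Submodule.subset_span ⟨j, hj, rfl⟩
  have : projCol Φ Λ (fun i' => Φ i' j) = fun i' => Φ i' j := by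
    have h2 := Submodule.starProjection_eq_self_iff.2 hmem
    exact congrArg (WithLp.equiv 2 (Fin M → ℝ)) h2
  simp [Amat, this]

lemma norm_Amat_le (x : Fin N → ℝ) :
    l2 ((Amat Φ Λ).mulVec x) ≤ l2 (Φ.mulVec x) := by
  rw [l2_eq_norm, l2_eq_norm]
  rw [Amat_mulVec]
  set v : EuclideanSpace ℝ (Fin M) := toE (Φ.mulVec x)
  set p : EuclideanSpace ℝ (Fin M) := (Submodule.orthogonalProjection (colSpan Φ Λ) v : EuclideanSpace ℝ (Fin M))
  have hw : toE (Φ.mulVec x - projCol Φ Λ (Φ.mulVec x)) = v - p := rfl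
  rw [hw]
  have hmem : v - p ∈ (colSpan Φ Λ)ᗮ := Submodule.sub_starProjection_mem_orthogonal _
  have hp : p ∈ colSpan Φ Λ := (Submodule.orthogonalProjection (colSpan Φ Λ) v).2
  have hinner : (inner ℝ p (v - p) : ℝ) = 0 :=
    Submodule.inner_right_of_mem_orthogonal hp hmem
  have hsq : ‖v‖ ^ 2 = ‖p‖ ^ 2 + ‖v - p‖ ^ 2 := by
    have h2 : ‖p + (v - p)‖ ^ 2 = ‖p‖ ^ 2 + 2 * (inner ℝ p (v - p) : ℝ) + ‖v - p‖ ^ 2 :=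
      norm_add_sq_real p (v - p)
    rw [hinner] at h2
    calc ‖v‖ ^ 2 = ‖p + (v - p)‖ ^ 2 := by rw [show p + (v - p) = v by abel]
    _ = ‖p‖ ^ 2 + ‖v - p‖ ^ 2 := by rw [h2]; ring
  nlinarith [norm_nonneg (v - p), norm_nonneg v, norm_nonneg p]

lemma l2_single (j : Fin N) : l2 (Pi.single j (1:ℝ)) = 1 := by
  rw [l2, Finset.sum_eq_single j (fun b _ hb => by simp [Pi.single_apply, hb]) (by simp)]
  simp

lemma dotp_single (j : Fin N) (y : Fin N → ℝ) : dotp (Pi.single j (1:ℝ)) y = y j := by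
  rw [dotp, Finset.sum_eq_single j] <;> simp +contextual [Pi.single_apply]

lemma supp_single_subset (j : Fin N) : supp (Pi.single j (1:ℝ)) ⊆ {j} := by
  intro i hi
  simp only [supp, mem_filter, mem_univ, true_and, Pi.single_apply] at hi
  simp only [mem_singleton]
  by_contra hij
  simp [hij] at hi

lemma dotp_sub_left {n : ℕ} (a b c : Fin n → ℝ) :
    dotp (a - b) c = dotp a c - dotp b c := by
  simp only [dotp, Pi.sub_apply, sub_mul, Finset.sum_sub_distrib]

/-- success of the identification step. -/
theorem stmt4 {M N : ℕ} (Φ : Matrix (Fin M) (Fin N) ℝ) (δ : ℝ) (Λ : Finset (Fin N))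
    (xt : Fin N → ℝ) (hdisj : supp xt ∩ Λ = ∅)
    (h : Fin N → ℝ) (hh : h = (Amat Φ Λ)ᵀ.mulVec ((Amat Φ Λ).mulVec xt))
    (hRIP : RIP ((supp xt).card + Λ.card + 1) Φ δ)
    (hinf : linf xt > 2 * δ / (1 - δ) * l2 xt) :
    ∃ j ∈ supp xt, ∀ j' ∉ supp xt, |h j'| < |h j| := by
  obtain ⟨hδ0, hδ1, hR⟩ := hRIP
  set K := (supp xt).card + Λ.card + 1 with hK
  obtain ⟨z, hz0, hzrep⟩ := mem_colSpan_rep Φ Λ (projCol_mem Φ Λ (Φ.mulVec xt))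
  have hzrep' : projCol Φ Λ (Φ.mulVec xt) = Φ.mulVec z := toE_inj hzrep
  set y : Fin N → ℝ := xt - z with hy
  have hAv : (Amat Φ Λ).mulVec xt = Φ.mulVec y := by
    rw [Amat_mulVec, hzrep', hy, Matrix.mulVec_sub]
  have hsuppy : supp y ⊆ supp xt ∪ Λ := by
    intro j hj
    rcases Finset.mem_union.1 (supp_sub_subset xt z hj) with h1 | h1
    · exact Finset.mem_union_left _ h1
    · refine Finset.mem_union_right _ ?_
      by_contra hc
      simp [supp, hz0 _ hc] at h1
  have hsy : (supp y).card ≤ (supp xt).card + Λ.card :=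
    le_trans (Finset.card_le_card hsuppy) (Finset.card_union_le _ _)
  have hl2y : 0 ≤ l2 y := l2_nonneg y
  -- key bound : |h j - y j| ≤ δ * l2 y for every j
  have key : ∀ j : Fin N, |h j - y j| ≤ δ * l2 y := by
    intro j
    have hcolsingle : (fun i => Φ i j) = Φ.mulVec (Pi.single j (1:ℝ)) := by
      funext i
      simp [Matrix.mulVec_single]
    have hdj : h j = dotp (Φ.mulVec (Pi.single j (1:ℝ))) (Φ.mulVec y) := by
      rw [hh, Amat_transpose_mulVec]
      have hcol : (fun i => Amat Φ Λ i j)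
          = (fun i => Φ i j) - projCol Φ Λ (fun i' => Φ i' j) := by
        funext i; simp [Amat]
      rw [hcol, dotp_sub_left,
        dotp_orthogonal Φ Λ (projCol_mem Φ Λ _) (Amat_mulVec_mem_orthogonal Φ Λ xt),
        sub_zero, hAv, hcolsingle]
    have hcard : (supp (Pi.single j (1:ℝ)) ∪ supp y).card ≤ K := by
      have hsub : supp (Pi.single j (1:ℝ)) ∪ supp y ⊆ insert j (supp xt ∪ Λ) := by
        intro i hi
        rcases Finset.mem_union.1 hi with h1 | h1
        · exact Finset.mem_insert.2 (Or.inl (Finset.mem_singleton.1 (supp_single_subset j h1)))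
        · exact Finset.mem_insert.2 (Or.inr (hsuppy h1))
      calc (supp (Pi.single j (1:ℝ)) ∪ supp y).card
          ≤ (insert j (supp xt ∪ Λ)).card := Finset.card_le_card hsub
        _ ≤ (supp xt ∪ Λ).card + 1 := Finset.card_insert_le _ _
        _ ≤ (supp xt).card + Λ.card + 1 := by
            have := Finset.card_union_le (supp xt) Λ; omega
    have hri := rip_inner ⟨hδ0, hδ1, hR⟩ (Pi.single j (1:ℝ)) y hcard
    rw [dotp_single, l2_single, mul_one] at hri
    rw [hdj]
    exact hri
  -- bound on l2 y
  have hRy := (hR y (by omega)).1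
  have hRx := (hR xt (by omega)).2
  have hPhiY : l2 (Φ.mulVec y) ≤ l2 (Φ.mulVec xt) := by
    rw [← hAv]; exact norm_Amat_le Φ Λ xt
  have hPhiY2 : l2 (Φ.mulVec y) ^ 2 ≤ l2 (Φ.mulVec xt) ^ 2 := by
    have := l2_nonneg (Φ.mulVec y); nlinarith
  have hybound : (1 - δ) * l2 y ≤ l2 xt := by
    have h1 : (1 - δ) * l2 y ^ 2 ≤ (1 + δ) * l2 xt ^ 2 := by linarith
    have h2 : ((1 - δ) * l2 y) ^ 2 ≤ l2 xt ^ 2 := by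
      nlinarith [mul_le_mul_of_nonneg_left h1 (by linarith : (0:ℝ) ≤ 1 - δ),
        sq_nonneg (δ * l2 xt), l2_nonneg xt]
    by_contra hc
    push_neg at hc
    have h3 : l2 xt ^ 2 < ((1 - δ) * l2 y) ^ 2 := by
      have hnn : 0 ≤ l2 xt := l2_nonneg xt
      nlinarith
    linarith
  have h2δ : 2 * δ * l2 y < linf xt := by
    have : 2 * δ * l2 y ≤ 2 * δ / (1 - δ) * l2 xt := by
      rw [div_mul_eq_mul_div, le_div_iff₀ (by linarith)]
      nlinarith
    linarith
  -- positivity of linf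
  have hlinfpos : 0 < linf xt := by
    have : 0 ≤ 2 * δ * l2 y := by positivity
    linarith
  -- find the max index
  have hNE : Nonempty (Fin N) := by
    rcases Nat.eq_zero_or_pos N with h0 | h0
    · exfalso
      subst h0
      have : linf xt = 0 := Real.iSup_of_isEmpty _
      linarith
    · exact ⟨⟨0, h0⟩⟩
  obtain ⟨j₀, hj₀⟩ := Finite.exists_max (fun j => |xt j|)
  have hlinf_le : linf xt ≤ |xt j₀| := ciSup_le hj₀
  have hj₀supp : j₀ ∈ supp xt := by
    simp only [supp, Finset.mem_filter, Finset.mem_univ, true_and]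
    intro hz
    rw [hz, abs_zero] at hlinf_le
    linarith
  have hj₀Λ : j₀ ∉ Λ := by
    intro hc
    have : j₀ ∈ supp xt ∩ Λ := Finset.mem_inter.2 ⟨hj₀supp, hc⟩
    rw [hdisj] at this
    exact absurd this (Finset.notMem_empty _)
  have hyj₀ : y j₀ = xt j₀ := by
    simp [hy, hz0 _ hj₀Λ]
  have hkey₀ := key j₀
  have hlow : linf xt - δ * l2 y ≤ |h j₀| := by
    have habs : |y j₀| - |h j₀| ≤ |h j₀ - y j₀| := by
      rw [abs_sub_comm]
      exact abs_sub_abs_le_abs_sub _ _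
    rw [hyj₀] at habs hkey₀
    linarith
  refine ⟨j₀, hj₀supp, ?_⟩
  intro j' hj'
  by_cases hj'Λ : j' ∈ Λ
  · have hzero : h j' = 0 := by
      rw [hh, Amat_transpose_mulVec]
      have : (fun i => Amat Φ Λ i j') = 0 := funext fun i => Amat_col_eq_zero Φ Λ hj'Λ i
      rw [this]
      simp [dotp]
    rw [hzero, abs_zero]
    linarith
  · have hyj' : y j' = 0 := by
      have hx : xt j' = 0 := by
        by_contra hc
        exact hj' (by simp [supp, hc])
      simp [hy, hx, hz0 _ hj'Λ]
    have := key j'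
    rw [hyj', sub_zero] at this
    linarith

end OMP
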